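/- For integers r ≥ 0, t ≥ 1, n ≥ 1 and any s, the Ducci coefficients satisfy the convolution identity a_{r+t,s} = Σ_{i=1}^{n} a_{t,i} · a_{r, s−i+1}, where the second index of each coefficient is read modulo n. -/

import Mathlib

/-- The Ducci coefficients `a_{r,s}`, with second index read modulo `n`:
`a_{0,1} = 1`, `a_{0,s} = 0` for `s ≠ 1`, and `a_{r,s} = a_{r-1,s} + a_{r-1,s-1}`. -/
def ducciCoeff (n : ℕ) : ℕ → ZMod n → ℕ
  | 0, s => if s = 1 then 1 else 0
  | r + 1, s => ducciCoeff n r s + ducciCoeff n r (s - 1)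

lemma sum_Icc_cast (n : ℕ) [NeZero n] (g : ZMod n → ℕ) :
    ∑ i ∈ Finset.Icc 1 n, g (i : ZMod n) = ∑ j : ZMod n, g j := by
  refine Finset.sum_nbij' (fun i => (i : ZMod n))
    (fun j => if j.val = 0 then n else j.val) ?_ ?_ ?_ ?_ ?_
  · intro a _; exact Finset.mem_univ _
  · intro j _
    have hn : n ≠ 0 := NeZero.ne n
    have hlt := ZMod.val_lt j
    by_cases h : j.val = 0 <;> simp [h, Finset.mem_Icc] <;> omega
  · intro i hi
    simp only [Finset.mem_Icc] at hi
    have hv : (i : ZMod n).val = i % n := ZMod.val_natCast n i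
    rcases eq_or_lt_of_le hi.2 with h | h
    · subst h
      simp [hv, Nat.mod_self]
    · have : i % n = i := Nat.mod_eq_of_lt h
      simp [hv, this]
      omega
  · intro j _
    by_cases h : j.val = 0
    · have : j = 0 := by
        rwa [ZMod.val_eq_zero] at h
      simp [h, this]
    · simp [h, ZMod.natCast_val, ZMod.cast_id]
  · intro a _; rfl

lemma ducci_conv_univ (n : ℕ) [NeZero n] (r t : ℕ) (s : ZMod n) :
    ducciCoeff n (r + t) s =
      ∑ j : ZMod n, ducciCoeff n t j * ducciCoeff n r (s - j + 1) := by
  induction t generalizing s with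
  | zero =>
    simp only [ducciCoeff, Nat.add_zero, ite_mul, one_mul, zero_mul]
    rw [Finset.sum_ite_eq' Finset.univ (1 : ZMod n)]
    simp
  | succ t ih =>
    have h1 : r + (t + 1) = (r + t) + 1 := by ring
    rw [h1]
    show ducciCoeff n (r + t) s + ducciCoeff n (r + t) (s - 1) = _
    rw [ih s, ih (s - 1)]
    have : ∀ j : ZMod n, ducciCoeff n (t+1) j = ducciCoeff n t j + ducciCoeff n t (j - 1) :=
      fun j => rfl
    simp only [this, add_mul, Finset.sum_add_distrib]
    congr 1
    rw [← Equiv.sum_comp (Equiv.addRight (1 : ZMod n))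
      (fun j => ducciCoeff n t (j - 1) * ducciCoeff n r (s - j + 1))]
    apply Finset.sum_congr rfl
    intro j _
    simp only [Equiv.coe_addRight, add_sub_cancel_right]
    congr 1
    ring_nf

/-- Convolution identity: `a_{r+t,s} = Σ_{i=1}^{n} a_{t,i} · a_{r, s-i+1}`. -/
theorem ducciCoeff_convolution (n : ℕ) (hn : 1 ≤ n) (r t : ℕ) (ht : 1 ≤ t) (s : ZMod n) :
    ducciCoeff n (r + t) s =
      ∑ i ∈ Finset.Icc 1 n,
        ducciCoeff n t (i : ZMod n) * ducciCoeff n r (s - (i : ZMod n) + 1) := by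
  haveI : NeZero n := ⟨by omega⟩
  rw [sum_Icc_cast n (fun j => ducciCoeff n t j * ducciCoeff n r (s - j + 1))]
  exact ducci_conv_univ n r t s
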